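/- Let R be a commutative ring, M an R-module, I an ideal of R with I ⊆ Ann(M), and K a pseudo-absorbing primary submodule of M. Then K is a pseudo-absorbing primary submodule of M regarded as an R/I-module; specifically (K :_{R/I} M) = Q/I where Q = (K :_R M) is 2-absorbing primary, and Q/I is a 2-absorbing primary ideal of R/I. -/
import Mathlib

/-- A proper ideal `I` is 2-absorbing primary if `a*b*c ∈ I` implies
`a*b ∈ I` or `a*c ∈ √I` or `b*c ∈ √I`. -/
def IsTwoAbsPrimary {R : Type*} [CommRing R] (I : Ideal R) : Prop :=
  I ≠ ⊤ ∧ ∀ a b c : R, a * b * c ∈ I → a * b ∈ I ∨ a * c ∈ I.radical ∨ b * c ∈ I.radical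

/-- A proper submodule `N` of `M` is pseudo-absorbing primary if `(N :_R M)`
is a 2-absorbing primary ideal of `R`. -/
def IsPseudoAbsPrimary {R M : Type*} [CommRing R] [AddCommGroup M] [Module R M]
    (N : Submodule R M) : Prop :=
  N ≠ ⊤ ∧ IsTwoAbsPrimary (N.colon ⊤)

/-- `M` is a pseudo-absorbing primary multiplication module if every
pseudo-absorbing primary submodule `N` satisfies `N = I • M` for some ideal `I`. -/
def IsPAPMultiplication (R M : Type*) [CommRing R] [AddCommGroup M] [Module R M] : Prop :=
  ∀ N : Submodule R M, IsPseudoAbsPrimary N → ∃ I : Ideal R, N = I • (⊤ : Submodule R M)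

/-- If I ⊆ Ann(M) and K is a pseudo-absorbing primary submodule of the R-module M,
then K, viewed as a submodule of M over R/I, is pseudo-absorbing primary, with
(K :_{R/I} M) = (K :_R M)/I; in particular (K :_R M)/I is a 2-absorbing primary
ideal of R/I. -/
theorem stmt_1 {R M : Type*} [CommRing R] [AddCommGroup M] [Module R M]
    (I : Ideal R) (hI : Module.IsTorsionBySet R M I)
    (K : Submodule R M) (hK : IsPseudoAbsPrimary K) :
    letI : Module (R ⧸ I) M := hI.module
    ∃ K' : Submodule (R ⧸ I) M, (K' : Set M) = (K : Set M) ∧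
      Submodule.colon K' ⊤ = (Submodule.colon K ⊤).map (Ideal.Quotient.mk I) ∧
      IsPseudoAbsPrimary K' ∧
      IsTwoAbsPrimary ((Submodule.colon K ⊤).map (Ideal.Quotient.mk I)) := by
  letI : Module (R ⧸ I) M := hI.module
  obtain ⟨hKne, hQne, hQ⟩ := hK
  set Q := Submodule.colon K (⊤ : Submodule R M) with hQdef
  have hsmul : ∀ (r : R) (m : M), (Ideal.Quotient.mk I r) • m = r • m := fun r m =>
    hI.mk_smul r m
  have hIQ : I ≤ Q := fun r hr => by
    rw [Submodule.mem_colon]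
    intro m _
    rw [show r • m = 0 from @hI m ⟨r, hr⟩]
    exact K.zero_mem
  set K' : Submodule (R ⧸ I) M :=
    { carrier := K
      add_mem' := fun h1 h2 => K.add_mem h1 h2
      zero_mem' := K.zero_mem
      smul_mem' := by
        intro c x hx
        obtain ⟨r, rfl⟩ := Ideal.Quotient.mk_surjective c
        rw [hsmul]
        exact K.smul_mem r hx } with hK'def
  have hmemQ : ∀ r : R, Ideal.Quotient.mk I r ∈ Q.map (Ideal.Quotient.mk I) ↔ r ∈ Q := by
    intro r
    rw [Ideal.mem_map_iff_of_surjective _ Ideal.Quotient.mk_surjective]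
    constructor
    · rintro ⟨q, hq, hqr⟩
      have hd : q - r ∈ I := Ideal.Quotient.eq.mp hqr
      have : r - q ∈ I := by simpa using I.neg_mem hd
      have := Q.add_mem (hIQ this) hq
      simpa using this
    · intro h; exact ⟨r, h, rfl⟩
  have hcolon : Submodule.colon K' ⊤ = Q.map (Ideal.Quotient.mk I) := by
    ext c
    obtain ⟨r, rfl⟩ := Ideal.Quotient.mk_surjective c
    rw [hmemQ, Submodule.mem_colon, hQdef, Submodule.mem_colon]
    constructor
    · intro h m hm
      have := h m hm
      rwa [hsmul] at this
    · intro h m hm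
      rw [hsmul]
      exact h m hm
  have hradmap : ∀ r : R, r ∈ Q.radical →
      Ideal.Quotient.mk I r ∈ (Q.map (Ideal.Quotient.mk I)).radical := by
    rintro r ⟨n, hn⟩
    exact ⟨n, by rw [← map_pow]; exact Ideal.mem_map_of_mem _ hn⟩
  have hmap : IsTwoAbsPrimary (Q.map (Ideal.Quotient.mk I)) := by
    constructor
    · intro htop
      apply hQne
      rw [Ideal.eq_top_iff_one] at htop ⊢
      rw [show (1 : R ⧸ I) = Ideal.Quotient.mk I 1 from rfl, hmemQ] at htop
      exact htop
    · intro a b c habc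
      obtain ⟨a, rfl⟩ := Ideal.Quotient.mk_surjective a
      obtain ⟨b, rfl⟩ := Ideal.Quotient.mk_surjective b
      obtain ⟨c, rfl⟩ := Ideal.Quotient.mk_surjective c
      rw [← map_mul, ← map_mul, hmemQ] at habc
      rcases hQ a b c habc with h | h | h
      · exact Or.inl (by rw [← map_mul]; exact (hmemQ _).mpr h)
      · exact Or.inr (Or.inl (by rw [← map_mul]; exact hradmap _ h))
      · exact Or.inr (Or.inr (by rw [← map_mul]; exact hradmap _ h))
  have hK'ne : K' ≠ ⊤ := by
    intro h
    apply hKne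
    rw [Submodule.eq_top_iff'] at h ⊢
    exact h
  exact ⟨K', rfl, hcolon, ⟨hK'ne, hcolon ▸ hmap⟩, hmap⟩
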